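/- Let Φ be a crystallographic root system with Weyl group W and simple roots Δ. A Φ-poset R lies in WOIP(Φ) := { R(w) ∩ R(w') : w ≤ w' in weak order } (where R(w) = w(Φ⁺)) if and only if for all α, β both in Φ⁺ or both in Φ⁻ with α + β ∈ R, one has α ∈ R or β ∈ R. -/

import Mathlib

open Pointwise

structure RootSys (V : Type*) [NormedAddCommGroup V] [InnerProductSpace ℝ V] where
  Φ : Set V
  finite : Φ.Finite
  nonzero : ∀ α ∈ Φ, α ≠ (0 : V)
  line : ∀ α ∈ Φ, Φ ∩ {x : V | ∃ t : ℝ, x = t • α} = {α, -α}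
  reflect : ∀ α ∈ Φ, ∀ β ∈ Φ, β - (2 * (inner ℝ α β : ℝ) / (inner ℝ α α : ℝ)) • α ∈ Φ

variable {V : Type*} [NormedAddCommGroup V] [InnerProductSpace ℝ V]

/-- `Φ` is crystallographic: `⟨α^∨, β⟩ ∈ ℤ` for all roots `α, β`. -/
def RootSys.IsCrystallographic (R : RootSys V) : Prop :=
  ∀ α ∈ R.Φ, ∀ β ∈ R.Φ, ∃ n : ℤ, 2 * (inner ℝ α β : ℝ) / (inner ℝ α α : ℝ) = (n : ℝ)

/-- A subset `S ⊆ Φ` is closed if it is stable under sums of two elements staying in `Φ`. -/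
def RootSys.IsClosedSubset (R : RootSys V) (S : Set V) : Prop :=
  ∀ α ∈ S, ∀ β ∈ S, α + β ∈ R.Φ → α + β ∈ S

/-- A set of roots is antisymmetric if it never contains both `α` and `-α`. -/
def IsAntisymSet (S : Set V) : Prop := ∀ α ∈ S, -α ∉ S

/-- A `Φ`-poset: an antisymmetric closed subset of `Φ`. -/
def RootSys.IsPoset (R : RootSys V) (S : Set V) : Prop :=
  S ⊆ R.Φ ∧ IsAntisymSet S ∧ R.IsClosedSubset S

/-- Closure: roots that are nonnegative integer combinations (multiset sums) of elements of `T`. -/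
def RootSys.clos (R : RootSys V) (T : Set V) : Set V :=
  {γ ∈ R.Φ | ∃ M : Multiset V, (∀ x ∈ M, x ∈ T) ∧ M.sum = γ}

/-- Nonnegative integer combinations (multiset sums) of elements of `T`. -/
def nncomb (T : Set V) : Set V :=
  {v | ∃ M : Multiset V, (∀ x ∈ M, x ∈ T) ∧ M.sum = v}

/-- A root system equipped with a generic linear functional determining positive roots. -/
structure PosRootSys (V : Type*) [NormedAddCommGroup V] [InnerProductSpace ℝ V]
    extends RootSys V where
  f : V →ₗ[ℝ] ℝ
  generic : ∀ α ∈ Φ, f α ≠ 0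

def PosRootSys.Pos (P : PosRootSys V) : Set V := {α ∈ P.Φ | 0 < P.f α}

def PosRootSys.Neg (P : PosRootSys V) : Set V := {α ∈ P.Φ | P.f α < 0}

/-- The weak order: `R ≼ S` iff `R⁺ ⊇ S⁺` and `R⁻ ⊆ S⁻`. -/
def PosRootSys.wle (P : PosRootSys V) (R S : Set V) : Prop :=
  S ∩ P.Pos ⊆ R ∩ P.Pos ∧ R ∩ P.Neg ⊆ S ∩ P.Neg

/-- `R` is semiclosed if both `R⁺` and `R⁻` are closed. -/
def PosRootSys.SemiClosed (P : PosRootSys V) (S : Set V) : Prop :=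
  S ⊆ P.Φ ∧ P.toRootSys.IsClosedSubset (S ∩ P.Pos) ∧
    P.toRootSys.IsClosedSubset (S ∩ P.Neg)

/-- Negative closure deletion. -/
def PosRootSys.ncd (P : PosRootSys V) (S : Set V) : Set V :=
  S \ {α | α ∈ S ∩ P.Neg ∧ ∃ X : Finset V, ↑X ⊆ S ∩ P.Pos ∧ α + X.sum id ∈ P.Φ \ S}

/-- Positive closure deletion. -/
def PosRootSys.pcd (P : PosRootSys V) (S : Set V) : Set V :=
  S \ {α | α ∈ S ∩ P.Pos ∧ ∃ X : Finset V, ↑X ⊆ S ∩ P.Neg ∧ α + X.sum id ∈ P.Φ \ S}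

/-- Meet formula on closed subsets. -/
def PosRootSys.wmeet (P : PosRootSys V) (R S : Set V) : Set V :=
  P.ncd (P.toRootSys.clos ((R ∪ S) ∩ P.Pos) ∪ ((R ∩ S) ∩ P.Neg))

/-- Join formula on closed subsets. -/
def PosRootSys.wjoin (P : PosRootSys V) (R S : Set V) : Set V :=
  P.pcd (((R ∩ S) ∩ P.Pos) ∪ P.toRootSys.clos ((R ∪ S) ∩ P.Neg))

/-- The Weyl group: the subgroup of linear isometries generated by the reflections
orthogonal to the roots. -/
noncomputable def RootSys.weylGroup [FiniteDimensional ℝ V] (R : RootSys V) :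
    Subgroup (V ≃ₗᵢ[ℝ] V) :=
  Subgroup.closure {e | ∃ α ∈ R.Φ, e = Submodule.reflection (Submodule.span ℝ {α})ᗮ}

/-- Inversion set: `inv(w) = Φ⁺ ∩ w(Φ⁻)`. -/
def PosRootSys.invSet (P : PosRootSys V) (w : V ≃ₗᵢ[ℝ] V) : Set V :=
  P.Pos ∩ (⇑w '' P.Neg)


section Aux

variable {V : Type*} [NormedAddCommGroup V] [InnerProductSpace ℝ V]

lemma st17_neg_mem (R : RootSys V) {α : V} (h : α ∈ R.Φ) : -α ∈ R.Φ := by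
  have hline := R.line α h
  have : -α ∈ R.Φ ∩ {x : V | ∃ t : ℝ, x = t • α} := by
    rw [hline]; simp
  exact this.1

lemma st17_two_smul_not_mem (R : RootSys V) {α : V} (h : α ∈ R.Φ) :
    α + α ∉ R.Φ := by
  intro h2
  have hα0 := R.nonzero α h
  have hline := R.line α h
  have : α + α ∈ R.Φ ∩ {x : V | ∃ t : ℝ, x = t • α} := by
    refine ⟨h2, ⟨2, ?_⟩⟩; rw [two_smul]
  rw [hline] at this
  rcases this with h' | h'
  · apply hα0
    have : α + α - α = α - α := by rw [h']
    simpa using this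
  · simp only [Set.mem_singleton_iff] at h'
    apply hα0
    have : (3 : ℝ) • α = 0 := by
      rw [show (3:ℝ) = 2 + 1 by norm_num, add_smul, two_smul, one_smul]
      rw [h']; abel
    have := smul_eq_zero.mp this
    simpa using this

lemma st17_inner_self_pos (R : RootSys V) {α : V} (h : α ∈ R.Φ) :
    0 < (inner ℝ α α : ℝ) := by
  rw [real_inner_self_eq_norm_sq]
  have h0 : 0 < ‖α‖ := norm_pos_iff.mpr (R.nonzero α h)
  positivity

lemma st17_mem_pos_or_neg (P : PosRootSys V) {α : V} (h : α ∈ P.Φ) :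
    α ∈ P.Pos ∨ α ∈ P.Neg := by
  rcases lt_or_gt_of_ne (P.generic α h) with h' | h'
  · exact Or.inr ⟨h, h'⟩
  · exact Or.inl ⟨h, h'⟩

lemma st17_pos_neg_disjoint (P : PosRootSys V) {α : V} (h : α ∈ P.Pos) :
    α ∉ P.Neg := fun h' => absurd h.2 (not_lt.mpr h'.2.le)

lemma st17_neg_mem_neg (P : PosRootSys V) {α : V} (h : α ∈ P.Pos) : -α ∈ P.Neg :=
  ⟨st17_neg_mem P.toRootSys h.1, by simpa using h.2⟩

lemma st17_neg_mem_pos (P : PosRootSys V) {α : V} (h : α ∈ P.Neg) : -α ∈ P.Pos :=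
  ⟨st17_neg_mem P.toRootSys h.1, by simpa using h.2⟩

lemma st17_pos_add (P : PosRootSys V) {x y : V} (hx : x ∈ P.Pos) (hy : y ∈ P.Pos)
    (h : x + y ∈ P.Φ) : x + y ∈ P.Pos :=
  ⟨h, by rw [map_add]; exact add_pos hx.2 hy.2⟩

lemma st17_neg_add (P : PosRootSys V) {x y : V} (hx : x ∈ P.Neg) (hy : y ∈ P.Neg)
    (h : x + y ∈ P.Φ) : x + y ∈ P.Neg :=
  ⟨h, by rw [map_add]; exact add_neg hx.2 hy.2⟩

lemma st17_reflection_apply [FiniteDimensional ℝ V] {α : V} (hα : α ≠ 0) (x : V) :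
    Submodule.reflection (Submodule.span ℝ {α})ᗮ x
      = x - (2 * (inner ℝ α x : ℝ) / (inner ℝ α α : ℝ)) • α := by
  rw [Submodule.reflection_orthogonal_apply, Submodule.reflection_apply,
    Submodule.starProjection_singleton, real_inner_self_eq_norm_sq]
  simp only [RCLike.ofReal_real_eq_id, id]
  have h0 : 0 < ‖α‖ := norm_pos_iff.mpr hα
  have hs : (‖α‖ : ℝ) ^ 2 ≠ 0 := by positivity
  set c : ℝ := (inner ℝ α x : ℝ) / (‖α‖ ^ 2) with hc
  have h2 : (2 * (inner ℝ α x : ℝ) / (‖α‖ ^ 2)) • α = c • α + c • α := by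
    rw [← add_smul, hc]
    congr 1
    field_simp
    ring
  rw [two_smul, h2]
  abel

end Aux

section Refl

set_option linter.unusedSectionVars false

variable [FiniteDimensional ℝ V]

/-- The reflection associated to a root. -/
noncomputable def sref (α : V) : V ≃ₗᵢ[ℝ] V := Submodule.reflection (Submodule.span ℝ {α})ᗮ

lemma sref_apply {α : V} (hα : α ≠ 0) (x : V) :
    sref α x = x - (2 * (inner ℝ α x : ℝ) / (inner ℝ α α : ℝ)) • α :=
  st17_reflection_apply hα x

lemma sref_sref (α : V) (x : V) : sref α (sref α x) = x :=
  Submodule.reflection_involutive _ x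

lemma sref_self {α : V} : sref α α = -α :=
  Submodule.reflection_orthogonalComplement_singleton_eq_neg α

lemma sref_mem (R : RootSys V) {α β : V} (hα : α ∈ R.Φ) (hβ : β ∈ R.Φ) :
    sref α β ∈ R.Φ := by
  rw [sref_apply (R.nonzero α hα)]
  exact R.reflect α hα β hβ

lemma st17_weyl_image (R : RootSys V) {w : V ≃ₗᵢ[ℝ] V} (hw : w ∈ R.weylGroup) :
    ⇑w '' R.Φ = R.Φ := by
  refine Subgroup.closure_induction
    (p := fun (e : V ≃ₗᵢ[ℝ] V) _ => ⇑e '' R.Φ = R.Φ) ?_ ?_ ?_ ?_ hw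
  · rintro x ⟨α, hα, rfl⟩
    have hsub : ⇑(sref α) '' R.Φ ⊆ R.Φ := by
      rintro y ⟨β, hβ, rfl⟩
      exact sref_mem R hα hβ
    have : R.Φ ⊆ ⇑(sref α) '' R.Φ := by
      intro y hy
      exact ⟨sref α y, hsub ⟨y, hy, rfl⟩, sref_sref α y⟩
    exact le_antisymm hsub this
  · simp
  · intro x y _ _ hx hy
    have : ⇑(x * y) = ⇑x ∘ ⇑y := rfl
    rw [this, Set.image_comp, hy, hx]
  · intro x _ hx
    have h1 : ⇑x⁻¹ '' R.Φ = ⇑x⁻¹ '' (⇑x '' R.Φ) := by rw [hx]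
    rw [h1, ← Set.image_comp]
    have h2 : ⇑x⁻¹ ∘ ⇑x = id := by
      funext y
      exact x.symm_apply_apply y
    rw [h2, Set.image_id]

lemma st17_weyl_mem_iff (R : RootSys V) {w : V ≃ₗᵢ[ℝ] V} (hw : w ∈ R.weylGroup)
    {x : V} : w x ∈ R.Φ ↔ x ∈ R.Φ := by
  constructor
  · intro h
    rw [← st17_weyl_image R hw] at h
    obtain ⟨y, hy, hxy⟩ := h
    rwa [← w.injective hxy]
  · intro h
    rw [← st17_weyl_image R hw]
    exact ⟨x, h, rfl⟩

lemma st17_image_neg_iff (P : PosRootSys V) (w : V ≃ₗᵢ[ℝ] V) {x : V} :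
    x ∈ ⇑w '' P.Neg ↔ -x ∈ ⇑w '' P.Pos := by
  constructor
  · rintro ⟨y, hy, rfl⟩
    exact ⟨-y, st17_neg_mem_pos P hy, by simp⟩
  · rintro ⟨y, hy, h⟩
    refine ⟨-y, st17_neg_mem_neg P hy, ?_⟩
    rw [map_neg, h, neg_neg]

lemma st17_image_cover (P : PosRootSys V) {w : V ≃ₗᵢ[ℝ] V}
    (hw : w ∈ P.toRootSys.weylGroup) {x : V} (hx : x ∈ P.Φ) :
    x ∈ ⇑w '' P.Pos ∨ x ∈ ⇑w '' P.Neg := by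
  have : w.symm x ∈ P.Φ := by
    have := (st17_weyl_mem_iff P.toRootSys hw (x := w.symm x)).mpr
    rw [← st17_weyl_mem_iff P.toRootSys hw]
    simpa using hx
  rcases st17_mem_pos_or_neg P this with h | h
  · exact Or.inl ⟨w.symm x, h, by simp⟩
  · exact Or.inr ⟨w.symm x, h, by simp⟩

lemma st17_image_pos_neg_disj (P : PosRootSys V) (w : V ≃ₗᵢ[ℝ] V) {x : V}
    (h : x ∈ ⇑w '' P.Pos) : x ∉ ⇑w '' P.Neg := by
  rintro ⟨y, hy, rfl⟩
  obtain ⟨z, hz, hzy⟩ := h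
  rw [w.injective hzy] at hz
  exact st17_pos_neg_disjoint P hz hy

lemma st17_image_pos_closed (P : PosRootSys V) {w : V ≃ₗᵢ[ℝ] V}
    (hw : w ∈ P.toRootSys.weylGroup) :
    P.toRootSys.IsClosedSubset (⇑w '' P.Pos) := by
  rintro x ⟨a, ha, rfl⟩ y ⟨b, hb, rfl⟩ hxy
  have hab : w a + w b = w (a + b) := (map_add w a b).symm
  rw [hab] at hxy ⊢
  have habΦ : a + b ∈ P.Φ := (st17_weyl_mem_iff P.toRootSys hw).mp hxy
  exact ⟨a + b, st17_pos_add P ha hb habΦ, rfl⟩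

lemma st17_image_neg_closed (P : PosRootSys V) {w : V ≃ₗᵢ[ℝ] V}
    (hw : w ∈ P.toRootSys.weylGroup) :
    P.toRootSys.IsClosedSubset (⇑w '' P.Neg) := by
  rintro x ⟨a, ha, rfl⟩ y ⟨b, hb, rfl⟩ hxy
  have hab : w a + w b = w (a + b) := (map_add w a b).symm
  rw [hab] at hxy ⊢
  have habΦ : a + b ∈ P.Φ := (st17_weyl_mem_iff P.toRootSys hw).mp hxy
  exact ⟨a + b, st17_neg_add P ha hb habΦ, rfl⟩

lemma sref_mem_weyl (R : RootSys V) {α : V} (hα : α ∈ R.Φ) :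
    sref α ∈ R.weylGroup :=
  Subgroup.subset_closure ⟨α, hα, rfl⟩

end Refl

section Key

set_option linter.unusedSectionVars false

variable [FiniteDimensional ℝ V]

lemma st17_key (R : RootSys V) (hcr : R.IsCrystallographic) {α β : V}
    (hα : α ∈ R.Φ) (hβ : β ∈ R.Φ) (hip : 0 < (inner ℝ α β : ℝ))
    (h1 : β ≠ α) (h2 : β ≠ -α) : β - α ∈ R.Φ := by
  obtain ⟨m, hm⟩ := hcr α hα β hβ
  obtain ⟨k, hk⟩ := hcr β hβ α hα
  have hsα := st17_inner_self_pos R hα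
  have hsβ := st17_inner_self_pos R hβ
  have hcomm : (inner ℝ β α : ℝ) = (inner ℝ α β : ℝ) := real_inner_comm α β
  have hm1 : 1 ≤ m := by
    have h0 : (0:ℝ) < (m:ℝ) := by
      rw [← hm]; positivity
    have : (0:ℤ) < m := by exact_mod_cast h0
    omega
  have hk1 : 1 ≤ k := by
    have h0 : (0:ℝ) < (k:ℝ) := by
      rw [← hk, hcomm]; positivity
    have : (0:ℤ) < k := by exact_mod_cast h0
    omega
  by_cases hm' : m = 1
  · have hr := R.reflect α hα β hβ
    rw [hm, hm'] at hr
    simpa using hr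
  by_cases hk' : k = 1
  · have hr := R.reflect β hβ α hα
    rw [hk, hk'] at hr
    have : -(α - β) ∈ R.Φ := st17_neg_mem R (by simpa using hr)
    simpa [neg_sub] using this
  exfalso
  have hm2 : 2 ≤ m := by omega
  have hk2 : 2 ≤ k := by omega
  have hα0 := R.nonzero α hα
  have hβ0 := R.nonzero β hβ
  have hnd : ∀ r : ℝ, β ≠ r • α := by
    intro r hr
    have hmem : β ∈ R.Φ ∩ {x : V | ∃ t : ℝ, x = t • α} := ⟨hβ, r, hr⟩
    rw [R.line α hα] at hmem
    rcases hmem with h | h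
    · exact h1 h
    · exact h2 h
  have hne1 : |(inner ℝ α β : ℝ) / (‖α‖ * ‖β‖)| ≠ 1 := by
    intro h
    obtain ⟨-, r, -, hβr⟩ := (abs_real_inner_div_norm_mul_norm_eq_one_iff α β).mp h
    exact hnd r hβr
  have hle : |(inner ℝ α β : ℝ) / (‖α‖ * ‖β‖)| ≤ 1 := by
    rw [abs_div]
    have h01 : 0 < ‖α‖ * ‖β‖ := by
      have := norm_pos_iff.mpr hα0
      have := norm_pos_iff.mpr hβ0
      positivity
    rw [div_le_one (by rwa [abs_of_pos h01])]
    rw [abs_of_pos h01]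
    exact abs_real_inner_le_norm α β
  have hlt : |(inner ℝ α β : ℝ) / (‖α‖ * ‖β‖)| < 1 := lt_of_le_of_ne hle hne1
  have hsq : (inner ℝ α β : ℝ) ^ 2 < ‖α‖ ^ 2 * ‖β‖ ^ 2 := by
    have h01 : 0 < ‖α‖ * ‖β‖ := by
      have := norm_pos_iff.mpr hα0
      have := norm_pos_iff.mpr hβ0
      positivity
    have habs : |(inner ℝ α β : ℝ)| < ‖α‖ * ‖β‖ := by
      have h' := hlt
      rw [abs_div, abs_of_pos h01, div_lt_one h01] at h'
      exact h'
    nlinarith [sq_abs (inner ℝ α β : ℝ), abs_nonneg (inner ℝ α β : ℝ)]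
  have hmr : (m:ℝ) * (inner ℝ α α : ℝ) = 2 * (inner ℝ α β : ℝ) := by
    field_simp at hm
    linarith [hm]
  have hkr : (k:ℝ) * (inner ℝ β β : ℝ) = 2 * (inner ℝ α β : ℝ) := by
    rw [hcomm] at hk
    field_simp at hk
    linarith [hk]
  have hmr2 : (2:ℝ) ≤ (m:ℝ) := by exact_mod_cast hm2
  have hkr2 : (2:ℝ) ≤ (k:ℝ) := by exact_mod_cast hk2
  have hnormα : (inner ℝ α α : ℝ) = ‖α‖ ^ 2 := real_inner_self_eq_norm_sq α
  have hnormβ : (inner ℝ β β : ℝ) = ‖β‖ ^ 2 := real_inner_self_eq_norm_sq β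
  rw [hnormα] at hmr hsα
  rw [hnormβ] at hkr hsβ
  nlinarith [mul_le_mul hmr2 hkr2 (by norm_num) (by linarith),
    mul_pos hsα hsβ, hip]

lemma st17_core (P : PosRootSys V) (hcr : P.toRootSys.IsCrystallographic) {α : V}
    (hα : α ∈ P.Pos)
    (hsimp : ∀ x ∈ P.Pos, ∀ y ∈ P.Pos, x + y ≠ α) :
    ∀ n : ℕ, ∀ β ∈ P.Pos, β ≠ α →
      (2 * (inner ℝ α β : ℝ) / (inner ℝ α α : ℝ)) = (n + 1 : ℝ) →
      P.f (β - ((n : ℝ) + 1) • α) < 0 → False := by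
  intro n
  induction n using Nat.strong_induction_on with
  | _ n IH =>
  intro β hβ hβα hratio hneg
  have hαΦ : α ∈ P.Φ := hα.1
  have hβΦ : β ∈ P.Φ := hβ.1
  have hs := st17_inner_self_pos P.toRootSys hαΦ
  have hδnroot : β - ((n:ℝ) + 1) • α ∈ P.Φ := by
    have := P.reflect α hαΦ β hβΦ
    rwa [hratio] at this
  have h2i : 2 * (inner ℝ α β : ℝ) = ((n:ℝ) + 1) * (inner ℝ α α : ℝ) := by
    rw [div_eq_iff hs.ne'] at hratio
    exact hratio
  have hip : 0 < (inner ℝ α β : ℝ) := by nlinarith [Nat.cast_nonneg (α := ℝ) n]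
  have hβnα : β ≠ -α := by
    intro h
    rw [h] at hβ
    have := hβ.2
    rw [map_neg] at this
    linarith [hα.2]
  have hγ : β - α ∈ P.Φ := st17_key P.toRootSys hcr hαΦ hβΦ hip hβα hβnα
  have hγf : P.f (β - α) ≠ 0 := P.generic _ hγ
  rcases lt_or_gt_of_ne hγf with hγneg | hγpos
  · refine hsimp β hβ (α - β) ⟨?_, ?_⟩ (by abel)
    · rw [← neg_sub β α]
      exact st17_neg_mem _ hγ
    · rw [← neg_sub β α, map_neg]
      linarith
  · have hγpos' : β - α ∈ P.Pos := ⟨hγ, hγpos⟩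
    cases n with
    | zero =>
      simp only [Nat.cast_zero, zero_add, one_smul] at hneg
      linarith
    | succ m =>
      have hγα : β - α ≠ α := by
        intro h
        have hββ : β = α + α := sub_eq_iff_eq_add.mp h
        exact st17_two_smul_not_mem P.toRootSys hαΦ (hββ ▸ hβΦ)
      have hinnerγ : (inner ℝ α (β - α) : ℝ) = (inner ℝ α β : ℝ) - (inner ℝ α α : ℝ) := by
        rw [inner_sub_right]
      have hcast : ((Nat.succ m : ℕ) : ℝ) = (m:ℝ) + 1 := by push_cast; ring
      have hratioγ : 2 * (inner ℝ α (β - α) : ℝ) / (inner ℝ α α : ℝ) = (m:ℝ) := by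
        rw [hinnerγ]
        rw [hcast] at h2i
        field_simp
        nlinarith [h2i]
      have hδroot : (β - α) - (m:ℝ) • α ∈ P.Φ := by
        have := P.reflect α hαΦ (β - α) hγ
        rwa [hratioγ] at this
      have hδeq : (β - α) - (m:ℝ) • α = β - ((m:ℝ) + 1) • α := by
        module
      rw [hδeq] at hδroot
      have hδf : P.f (β - ((m:ℝ) + 1) • α) ≠ 0 := P.generic _ hδroot
      rcases lt_or_gt_of_ne hδf with hδneg | hδpos
      · cases m with
        | zero =>
          simp only [Nat.cast_zero, zero_add, one_smul] at hδneg
          linarith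
        | succ l =>
          refine IH l (by omega) (β - α) hγpos' hγα ?_ ?_
          · rw [hratioγ]
            push_cast
            ring
          · have heq2 : (β - α) - ((l:ℝ) + 1) • α = β - (((Nat.succ l : ℕ):ℝ) + 1) • α := by
              push_cast
              module
            rw [heq2]
            have : ((Nat.succ l : ℕ):ℝ) = (l:ℝ) + 1 := by push_cast; ring
            rw [this] at hδneg ⊢
            exact hδneg
      · refine hsimp (β - ((m:ℝ) + 1) • α) ⟨hδroot, hδpos⟩
          (α - (β - ((m:ℝ) + 1) • α)) ⟨?_, ?_⟩ (by abel)
        · have heq3 : α - (β - ((m:ℝ) + 1) • α) = -(β - (((Nat.succ m : ℕ):ℝ) + 1) • α) := by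
            rw [hcast]
            module
          rw [heq3]
          exact st17_neg_mem _ hδnroot
        · have heq3 : α - (β - ((m:ℝ) + 1) • α) = -(β - (((Nat.succ m : ℕ):ℝ) + 1) • α) := by
            rw [hcast]
            module
          rw [heq3, map_neg]
          rw [hcast] at hneg
          rw [hcast]
          linarith

lemma st17_simple_refl (P : PosRootSys V) (hcr : P.toRootSys.IsCrystallographic)
    {α : V} (hα : α ∈ P.Pos)
    (hsimp : ∀ x ∈ P.Pos, ∀ y ∈ P.Pos, x + y ≠ α) {β : V} (hβ : β ∈ P.Pos)
    (hne : β ≠ α) : sref α β ∈ P.Pos ∧ sref α β ≠ α := by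
  have hαΦ : α ∈ P.Φ := hα.1
  have hβΦ : β ∈ P.Φ := hβ.1
  have hα0 : α ≠ 0 := P.nonzero α hαΦ
  have hmem : sref α β ∈ P.Φ := sref_mem _ hαΦ hβΦ
  have happ : sref α β = β - (2 * (inner ℝ α β : ℝ) / (inner ℝ α α : ℝ)) • α :=
    sref_apply hα0 β
  have hs := st17_inner_self_pos P.toRootSys hαΦ
  constructor
  · refine ⟨hmem, ?_⟩
    rcases lt_or_gt_of_ne (P.generic _ hmem) with hf | hf
    swap
    · exact hf
    exfalso
    obtain ⟨m, hm⟩ := hcr α hαΦ β hβΦ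
    have hfval : P.f (sref α β) = P.f β - (m:ℝ) * P.f α := by
      rw [happ, hm, map_sub, map_smul]
      simp [smul_eq_mul]
    have hm1 : 1 ≤ m := by
      have : (0:ℝ) < (m:ℝ) := by
        by_contra h
        push_neg at h
        have : (m:ℝ) * P.f α ≤ 0 := mul_nonpos_of_nonpos_of_nonneg h hα.2.le
        rw [hfval] at hf
        linarith [hβ.2]
      have : (0:ℤ) < m := by exact_mod_cast this
      omega
    obtain ⟨n, rfl⟩ : ∃ n : ℕ, m = (n:ℤ) + 1 := ⟨(m - 1).toNat, by omega⟩
    refine st17_core P hcr hα hsimp n β hβ hne ?_ ?_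
    · rw [hm]; push_cast; ring
    · have : sref α β = β - ((n:ℝ) + 1) • α := by
        rw [happ, hm]; push_cast; ring_nf
      rwa [this] at hf
  · intro h
    have : β = sref α α := by
      rw [← sref_sref α β, h]
    rw [sref_self] at this
    rw [this] at hβ
    have := hβ.2
    rw [map_neg] at this
    linarith [hα.2]

end Key

section Biclosed

set_option linter.unusedSectionVars false

variable [FiniteDimensional ℝ V]

lemma st17_biclosed (P : PosRootSys V) (hcr : P.toRootSys.IsCrystallographic) :
    ∀ n : ℕ, ∀ A : Set V, A ⊆ P.Pos → A.ncard = n →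
      P.toRootSys.IsClosedSubset A → P.toRootSys.IsClosedSubset (P.Pos \ A) →
      ∃ w ∈ P.toRootSys.weylGroup, P.invSet w = A := by
  intro n
  induction n with
  | zero =>
    intro A hsub hcard _ _
    have hfin : A.Finite := P.finite.subset (fun x hx => (hsub hx).1)
    have hA : A = ∅ := (Set.ncard_eq_zero hfin).mp hcard
    refine ⟨1, one_mem _, ?_⟩
    rw [hA]
    ext x
    simp only [PosRootSys.invSet, Set.mem_inter_iff, Set.mem_empty_iff_false, iff_false,
      not_and]
    intro hxpos hximg
    have h1 : ⇑(1 : V ≃ₗᵢ[ℝ] V) = id := rfl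
    rw [h1, Set.image_id] at hximg
    exact st17_pos_neg_disjoint P hxpos hximg
  | succ n IHn =>
    intro A hsub hcard hcl hcocl
    have hfin : A.Finite := P.finite.subset (fun x hx => (hsub hx).1)
    have hne : A.Nonempty := Set.nonempty_of_ncard_ne_zero (by rw [hcard]; omega)
    obtain ⟨α, hαA, hmin⟩ := Set.exists_min_image A P.f hfin hne
    have hαpos : α ∈ P.Pos := hsub hαA
    have hαΦ : α ∈ P.Φ := hαpos.1
    have hsimp : ∀ x ∈ P.Pos, ∀ y ∈ P.Pos, x + y ≠ α := by
      intro x hx y hy hxy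
      have hxyΦ : x + y ∈ P.Φ := hxy ▸ hαΦ
      have hfeq : P.f α = P.f x + P.f y := by rw [← hxy, map_add]
      have hxA : x ∉ A := by
        intro h
        have := hmin x h
        linarith [hy.2]
      have hyA : y ∉ A := by
        intro h
        have := hmin y h
        linarith [hx.2]
      have := hcocl x ⟨hx, hxA⟩ y ⟨hy, hyA⟩ hxyΦ
      rw [hxy] at this
      exact this.2 hαA
    set s := sref α with hsdef
    have hsinv : ∀ x, s (s x) = x := sref_sref α
    have hsself : s α = -α := sref_self
    have hαker : ∀ x ∈ P.Pos, x ≠ α → s x ∈ P.Pos ∧ s x ≠ α := fun x hx hxa =>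
      st17_simple_refl P hcr hαpos hsimp hx hxa
    have hsmem : ∀ x ∈ P.Φ, s x ∈ P.Φ := fun x hx => sref_mem P.toRootSys hαΦ hx
    set A' := ⇑s '' (A \ {α}) with hA'
    have hA'sub : A' ⊆ P.Pos := by
      rintro _ ⟨a, ⟨haA, hane⟩, rfl⟩
      exact (hαker a (hsub haA) (by simpa using hane)).1
    have hA'card : A'.ncard = n := by
      rw [hA', Set.ncard_image_of_injective _ s.injective,
        Set.ncard_diff_singleton_of_mem hαA, hcard]
      omega
    have hA'cl : P.toRootSys.IsClosedSubset A' := by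
      rintro _ ⟨a, ⟨haA, hane⟩, rfl⟩ _ ⟨b, ⟨hbA, hbne⟩, rfl⟩ hsum
      rw [← map_add] at hsum ⊢
      have habΦ : a + b ∈ P.Φ := by
        have h2 := hsmem _ hsum
        rwa [hsinv] at h2
      have habA : a + b ∈ A := hcl a haA b hbA habΦ
      have habne : a + b ≠ α := by
        intro h
        have hfa : 0 < P.f (s a) := ((hαker a (hsub haA) (by simpa using hane)).1).2
        have hfb : 0 < P.f (s b) := ((hαker b (hsub hbA) (by simpa using hbne)).1).2
        have h3 : s (a + b) = -α := by rw [h, hsself]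
        rw [map_add] at h3
        have := congrArg P.f h3
        rw [map_add, map_neg] at this
        linarith [hαpos.2]
      exact ⟨a + b, ⟨habA, by simpa using habne⟩, rfl⟩
    have hA'cocl : P.toRootSys.IsClosedSubset (P.Pos \ A') := by
      intro x hx y hy hsum
      have hxy_pos : x + y ∈ P.Pos := st17_pos_add P hx.1 hy.1 hsum
      refine ⟨hxy_pos, ?_⟩
      rintro ⟨c, ⟨hcA, hcne⟩, hceq⟩
      have key : ∀ z, z ∈ P.Pos \ A' → z ≠ α → s z ∈ P.Pos ∧ s z ∉ A := by
        intro z hz hzα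
        obtain ⟨hzpos, hznA'⟩ := hz
        have h1 := hαker z hzpos hzα
        refine ⟨h1.1, fun hszA => ?_⟩
        exact hznA' ⟨s z, ⟨hszA, by simpa using h1.2⟩, hsinv z⟩
      have hceq' : c = s (x + y) := by rw [← hceq, hsinv]
      by_cases hxα : x = α
      · by_cases hyα : y = α
        · rw [hxα, hyα] at hsum
          exact st17_two_smul_not_mem P.toRootSys hαΦ hsum
        · obtain ⟨hsy_pos, hsynA⟩ := key y hy hyα
          have hc : c = s y - α := by
            rw [hceq', map_add, hxα, hsself]; abel
          have hcα : c + α = s y := by rw [hc]; abel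
          have hsyΦ : c + α ∈ P.Φ := by rw [hcα]; exact hsy_pos.1
          have := hcl c hcA α hαA hsyΦ
          rw [hcα] at this
          exact hsynA this
      · by_cases hyα : y = α
        · obtain ⟨hsx_pos, hsxnA⟩ := key x hx hxα
          have hc : c = s x - α := by
            rw [hceq', map_add, hyα, hsself]; abel
          have hcα : c + α = s x := by rw [hc]; abel
          have hsxΦ : c + α ∈ P.Φ := by rw [hcα]; exact hsx_pos.1
          have := hcl c hcA α hαA hsxΦ
          rw [hcα] at this
          exact hsxnA this
        · obtain ⟨hsx_pos, hsxnA⟩ := key x hx hxα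
          obtain ⟨hsy_pos, hsynA⟩ := key y hy hyα
          have hc : c = s x + s y := by rw [hceq', map_add]
          have hΦ : s x + s y ∈ P.Φ := by rw [← hc]; exact (hsub hcA).1
          have := hcocl (s x) ⟨hsx_pos, hsxnA⟩ (s y) ⟨hsy_pos, hsynA⟩ hΦ
          rw [← hc] at this
          exact this.2 hcA
    obtain ⟨w', hw'W, hw'inv⟩ := IHn A' hA'sub hA'card hA'cl hA'cocl
    refine ⟨s * w', mul_mem (sref_mem_weyl P.toRootSys hαΦ) hw'W, ?_⟩
    have hco : ⇑(s * w') = ⇑s ∘ ⇑w' := rfl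
    ext x
    simp only [PosRootSys.invSet, Set.mem_inter_iff]
    constructor
    · rintro ⟨hxpos, hximg⟩
      rw [hco, Set.image_comp] at hximg
      obtain ⟨y, hy, rfl⟩ := hximg
      by_cases hxa : s y = α
      · rw [hxa]; exact hαA
      · have hyPos : y ∈ P.Pos := by
          have h1 := (hαker (s y) hxpos hxa).1
          rwa [hsinv] at h1
        have hyinv : y ∈ P.invSet w' := ⟨hyPos, hy⟩
        rw [hw'inv, hA'] at hyinv
        obtain ⟨a, ⟨haA, -⟩, rfl⟩ := hyinv
        rw [hsinv]
        exact haA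
    · intro hxA
      have hxpos : x ∈ P.Pos := hsub hxA
      refine ⟨hxpos, ?_⟩
      rw [hco, Set.image_comp]
      by_cases hxa : x = α
      · have hαnA' : α ∉ A' := by
          rintro ⟨a, ⟨haA, -⟩, ha⟩
          have haeq : a = -α := by
            have h2 : a = s α := by rw [← ha, hsinv]
            rwa [hsself] at h2
          have h3 : a ∈ P.Pos := hsub haA
          rw [haeq] at h3
          have h4 := h3.2
          rw [map_neg] at h4
          linarith [hαpos.2]
        have hαwpos : α ∈ ⇑w' '' P.Pos := by
          rcases st17_image_cover P hw'W hαΦ with h | h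
          · exact h
          · have h5 : α ∈ P.invSet w' := ⟨hαpos, h⟩
            rw [hw'inv] at h5
            exact absurd h5 hαnA'
        have hnα : -α ∈ ⇑w' '' P.Neg := by
          rw [st17_image_neg_iff]
          simpa using hαwpos
        refine ⟨-α, hnα, ?_⟩
        rw [map_neg, hsself, neg_neg, hxa]
      · have hsxA' : s x ∈ A' := ⟨x, ⟨hxA, by simpa using hxa⟩, rfl⟩
        rw [← hw'inv] at hsxA'
        exact ⟨s x, hsxA'.2, hsinv x⟩

end Biclosed

theorem stmt17 [FiniteDimensional ℝ V] (P : PosRootSys V)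
    (hcr : P.toRootSys.IsCrystallographic)
    (R : Set V) (hR : P.toRootSys.IsPoset R) :
    (∃ v w : V ≃ₗᵢ[ℝ] V, v ∈ P.toRootSys.weylGroup ∧ w ∈ P.toRootSys.weylGroup ∧
        P.invSet v ⊆ P.invSet w ∧ R = (⇑v '' P.Pos) ∩ (⇑w '' P.Pos)) ↔
      (∀ α β : V, ((α ∈ P.Pos ∧ β ∈ P.Pos) ∨ (α ∈ P.Neg ∧ β ∈ P.Neg)) →
        α + β ∈ R → α ∈ R ∨ β ∈ R) := by
  constructor
  · rintro ⟨v, w, hvW, hwW, hvw, hReq⟩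
    intro α β hsign hsum
    have hsumΦ : α + β ∈ P.Φ := by
      rw [hReq] at hsum
      obtain ⟨y, hy, hyy⟩ := hsum.2
      rw [← hyy]
      exact (st17_weyl_mem_iff P.toRootSys hwW).mpr hy.1
    rcases hsign with ⟨hαp, hβp⟩ | ⟨hαn, hβn⟩
    · by_contra hcon
      push_neg at hcon
      obtain ⟨hαR, hβR⟩ := hcon
      have hQ : ∀ γ, γ ∈ P.Pos → γ ∈ ⇑w '' P.Pos → γ ∈ R := by
        intro γ hγpos hγw
        rw [hReq]
        refine ⟨?_, hγw⟩
        rcases st17_image_cover P hvW hγpos.1 with h | h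
        · exact h
        · exfalso
          have h1 : γ ∈ P.invSet v := ⟨hγpos, h⟩
          have h2 := hvw h1
          exact st17_image_pos_neg_disj P w hγw h2.2
      have hαw : α ∈ ⇑w '' P.Neg := by
        rcases st17_image_cover P hwW hαp.1 with h | h
        · exact absurd (hQ α hαp h) hαR
        · exact h
      have hβw : β ∈ ⇑w '' P.Neg := by
        rcases st17_image_cover P hwW hβp.1 with h | h
        · exact absurd (hQ β hβp h) hβR
        · exact h
      have hneg := st17_image_neg_closed P hwW α hαw β hβw hsumΦ
      have h2 : α + β ∈ ⇑w '' P.Pos := by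
        rw [hReq] at hsum
        exact hsum.2
      exact st17_image_pos_neg_disj P w h2 hneg
    · by_contra hcon
      push_neg at hcon
      obtain ⟨hαR, hβR⟩ := hcon
      have hQ : ∀ γ, γ ∈ P.Neg → γ ∈ ⇑v '' P.Pos → γ ∈ R := by
        intro γ hγneg hγv
        rw [hReq]
        refine ⟨hγv, ?_⟩
        have h1 : -γ ∈ P.invSet v := by
          refine ⟨st17_neg_mem_pos P hγneg, ?_⟩
          rw [st17_image_neg_iff]
          simpa using hγv
        have h2 := hvw h1
        have h3 := h2.2
        rw [st17_image_neg_iff] at h3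
        simpa using h3
      have hαv : α ∈ ⇑v '' P.Neg := by
        rcases st17_image_cover P hvW hαn.1 with h | h
        · exact absurd (hQ α hαn h) hαR
        · exact h
      have hβv : β ∈ ⇑v '' P.Neg := by
        rcases st17_image_cover P hvW hβn.1 with h | h
        · exact absurd (hQ β hβn h) hβR
        · exact h
      have hneg := st17_image_neg_closed P hvW α hαv β hβv hsumΦ
      have h2 : α + β ∈ ⇑v '' P.Pos := by
        rw [hReq] at hsum
        exact hsum.1
      exact st17_image_pos_neg_disj P v h2 hneg
  · intro hcond
    obtain ⟨hRΦ, hanti, hRcl⟩ := hR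
    set Av : Set V := {x | x ∈ P.Pos ∧ -x ∈ R} with hAvdef
    set Aw : Set V := P.Pos \ R with hAwdef
    have hAvsub : Av ⊆ P.Pos := fun x hx => hx.1
    have hAvcl : P.toRootSys.IsClosedSubset Av := by
      intro x hx y hy hxy
      refine ⟨st17_pos_add P hx.1 hy.1 hxy, ?_⟩
      have heq : -x + -y = -(x + y) := by abel
      have hnxy : -(x + y) ∈ P.Φ := st17_neg_mem _ hxy
      have h4 : -x + -y ∈ R := hRcl (-x) hx.2 (-y) hy.2 (by rw [heq]; exact hnxy)
      rwa [heq] at h4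
    have hAvcocl : P.toRootSys.IsClosedSubset (P.Pos \ Av) := by
      intro x hx y hy hxy
      refine ⟨st17_pos_add P hx.1 hy.1 hxy, ?_⟩
      intro hmem
      have heq : -x + -y = -(x + y) := by abel
      have h5 : -x + -y ∈ R := by rw [heq]; exact hmem.2
      rcases hcond (-x) (-y)
        (Or.inr ⟨st17_neg_mem_neg P hx.1, st17_neg_mem_neg P hy.1⟩) h5 with h | h
      · exact hx.2 ⟨hx.1, h⟩
      · exact hy.2 ⟨hy.1, h⟩
    have hAwsub : Aw ⊆ P.Pos := fun x hx => hx.1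
    have hAwcl : P.toRootSys.IsClosedSubset Aw := by
      intro x hx y hy hxy
      refine ⟨st17_pos_add P hx.1 hy.1 hxy, ?_⟩
      intro hmem
      rcases hcond x y (Or.inl ⟨hx.1, hy.1⟩) hmem with h | h
      · exact hx.2 h
      · exact hy.2 h
    have hAwcocl : P.toRootSys.IsClosedSubset (P.Pos \ Aw) := by
      intro x hx y hy hxy
      have hx' : x ∈ R := by
        by_contra h
        exact hx.2 ⟨hx.1, h⟩
      have hy' : y ∈ R := by
        by_contra h
        exact hy.2 ⟨hy.1, h⟩
      have hxyR : x + y ∈ R := hRcl x hx' y hy' hxy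
      exact ⟨st17_pos_add P hx.1 hy.1 hxy, fun h => h.2 hxyR⟩
    obtain ⟨v, hvW, hvinv⟩ := st17_biclosed P hcr Av.ncard Av hAvsub rfl hAvcl hAvcocl
    obtain ⟨w, hwW, hwinv⟩ := st17_biclosed P hcr Aw.ncard Aw hAwsub rfl hAwcl hAwcocl
    refine ⟨v, w, hvW, hwW, ?_, ?_⟩
    · rw [hvinv, hwinv]
      intro x hx
      refine ⟨hx.1, fun hxR => ?_⟩
      have := hanti (-x) hx.2
      rw [neg_neg] at this
      exact this hxR
    · ext x
      constructor
      · intro hxR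
        have hxΦ := hRΦ hxR
        rcases st17_mem_pos_or_neg P hxΦ with hxp | hxn
        · constructor
          · rcases st17_image_cover P hvW hxΦ with h | h
            · exact h
            · exfalso
              have h6 : x ∈ P.invSet v := ⟨hxp, h⟩
              rw [hvinv] at h6
              exact hanti x hxR h6.2
          · rcases st17_image_cover P hwW hxΦ with h | h
            · exact h
            · exfalso
              have h6 : x ∈ P.invSet w := ⟨hxp, h⟩
              rw [hwinv] at h6
              exact h6.2 hxR
        · have hnx : -x ∈ P.Pos := st17_neg_mem_pos P hxn
          constructor
          · have h6 : -x ∈ Av := ⟨hnx, by rwa [neg_neg]⟩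
            rw [← hvinv] at h6
            have h7 := h6.2
            rw [st17_image_neg_iff] at h7
            simpa using h7
          · have h6 : -x ∈ Aw := ⟨hnx, hanti x hxR⟩
            rw [← hwinv] at h6
            have h7 := h6.2
            rw [st17_image_neg_iff] at h7
            simpa using h7
      · rintro ⟨hxv, hxw⟩
        have hxΦ : x ∈ P.Φ := by
          obtain ⟨y, hy, rfl⟩ := hxv
          exact (st17_weyl_mem_iff P.toRootSys hvW).mpr hy.1
        rcases st17_mem_pos_or_neg P hxΦ with hxp | hxn
        · have h6 : x ∉ Aw := by
            rw [← hwinv]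
            intro h
            exact st17_image_pos_neg_disj P w hxw h.2
          by_contra hxR
          exact h6 ⟨hxp, hxR⟩
        · have hnx : -x ∈ P.Pos := st17_neg_mem_pos P hxn
          have hnxv : -x ∈ ⇑v '' P.Neg := by
            rw [st17_image_neg_iff]
            simpa using hxv
          have h6 : -x ∈ Av := by
            rw [← hvinv]
            exact ⟨hnx, hnxv⟩
          have h7 := h6.2
          rwa [neg_neg] at h7
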